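/- Let n, m, p ≥ 1, let A ∈ ℝ^{n×n}, B ∈ ℝ^{n×m}, C ∈ ℝ^{p×n}, D ∈ ℝ^{p×m}, let γ > 0, and let P ∈ ℝ^{n×n} be symmetric positive definite satisfying the bounded-real LMI with gain γ. Then there exists ε > 0 such that for every input sequence u : ℕ → ℝ^m and every horizon T ∈ ℕ, the output of the DT-LTI system satisfies ∑_{k=0}^{T−1} ‖z_k‖² ≤ (γ² − ε) ∑_{k=0}^{T−1} ‖u_k‖²; in particular the ℓ₂-gain of the system is strictly smaller than γ. -/

import Mathlib

open Matrix

/-- Squared Euclidean norm of a vector in `ℝ^d`. -/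
def sqNorm {d : ℕ} (v : Fin d → ℝ) : ℝ := ∑ i, v i ^ 2

/-- State trajectory of the DT-LTI system `h_{k+1} = A h_k + B u_k`, `h_0 = 0`. -/
noncomputable def ltiState {n m : ℕ} (A : Matrix (Fin n) (Fin n) ℝ)
    (B : Matrix (Fin n) (Fin m) ℝ) (u : ℕ → Fin m → ℝ) : ℕ → Fin n → ℝ
  | 0 => 0
  | k + 1 => A.mulVec (ltiState A B u k) + B.mulVec (u k)

/-- Output trajectory `z_k = C h_k + D u_k` of the DT-LTI system. -/
noncomputable def ltiOutput {n m p : ℕ} (A : Matrix (Fin n) (Fin n) ℝ)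
    (B : Matrix (Fin n) (Fin m) ℝ) (C : Matrix (Fin p) (Fin n) ℝ)
    (D : Matrix (Fin p) (Fin m) ℝ) (u : ℕ → Fin m → ℝ) (k : ℕ) : Fin p → ℝ :=
  C.mulVec (ltiState A B u k) + D.mulVec (u k)

/-- A positive definite real matrix has a uniformly positive quadratic form. -/
lemma posdef_quad_lb {ι : Type*} [Fintype ι] [DecidableEq ι] [Nonempty ι] {N : Matrix ι ι ℝ}
    (hN : N.PosDef) : ∃ ε > 0, ∀ x : ι → ℝ, ε * (x ⬝ᵥ x) ≤ x ⬝ᵥ N *ᵥ x := by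
  obtain ⟨i₀, -, hmin⟩ := Finset.exists_min_image Finset.univ hN.1.eigenvalues
    ⟨Classical.arbitrary ι, Finset.mem_univ _⟩
  simp only [Finset.mem_univ, forall_true_left, true_implies] at hmin
  refine ⟨hN.1.eigenvalues i₀, hN.eigenvalues_pos i₀, fun x => ?_⟩
  set ev := hN.1.eigenvalues with hev
  set U : Matrix ι ι ℝ := (hN.1.eigenvectorUnitary : Matrix ι ι ℝ) with hUdef
  have hUmem := hN.1.eigenvectorUnitary.2
  rw [Unitary.mem_iff] at hUmem
  have hU : U * Uᴴ = 1 := hUmem.2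
  have hspec : N = U * diagonal ev * Uᴴ := by
    have := hN.1.spectral_theorem
    simp only [Function.comp_def, RCLike.ofReal_real_eq_id, id] at this
    exact this
  set y : ι → ℝ := Uᴴ *ᵥ x with hy
  have hyy : y ⬝ᵥ y = x ⬝ᵥ x := by
    rw [hy, show (Uᴴ : Matrix ι ι ℝ) = Uᵀ from rfl, mulVec_transpose]
    nth_rewrite 2 [← mulVec_transpose]
    rw [← dotProduct_mulVec, mulVec_mulVec, show (Uᵀ : Matrix ι ι ℝ) = Uᴴ from rfl, hU,
      one_mulVec]
  have hquad : x ⬝ᵥ N *ᵥ x = y ⬝ᵥ diagonal ev *ᵥ y := by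
    rw [hspec, ← mulVec_mulVec, ← mulVec_mulVec, dotProduct_mulVec,
      show (U : Matrix ι ι ℝ).vecMul x = Uᵀ *ᵥ x from (mulVec_transpose U x).symm,
      show (Uᵀ : Matrix ι ι ℝ) = Uᴴ from rfl, hy]
  rw [hquad, ← hyy]
  simp only [dotProduct, mulVec_diagonal]
  rw [Finset.mul_sum]
  apply Finset.sum_le_sum
  intro i _
  have := hmin i
  nlinarith [sq_nonneg (y i)]

lemma sqNorm_eq_dot {d : ℕ} (v : Fin d → ℝ) : sqNorm v = v ⬝ᵥ v := by
  simp [sqNorm, dotProduct, sq]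

theorem stmt2 {n m p : ℕ} (hn : 1 ≤ n) (hm : 1 ≤ m) (hp : 1 ≤ p)
    (A : Matrix (Fin n) (Fin n) ℝ) (B : Matrix (Fin n) (Fin m) ℝ)
    (C : Matrix (Fin p) (Fin n) ℝ) (D : Matrix (Fin p) (Fin m) ℝ)
    (γ : ℝ) (hγ : 0 < γ) (P : Matrix (Fin n) (Fin n) ℝ) (hP : P.PosDef)
    (hLMI : (-(Matrix.fromBlocks
        (Aᵀ * P * A - P + Cᵀ * C) (Aᵀ * P * B + Cᵀ * D)
        (Bᵀ * P * A + Dᵀ * C) (Bᵀ * P * B + Dᵀ * D - γ ^ 2 • 1))).PosDef) :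
    ∃ ε > 0, ∀ (u : ℕ → Fin m → ℝ) (T : ℕ),
      ∑ k ∈ Finset.range T, sqNorm (ltiOutput A B C D u k)
        ≤ (γ ^ 2 - ε) * ∑ k ∈ Finset.range T, sqNorm (u k) := by
  haveI : Nonempty (Fin m) := ⟨⟨0, hm⟩⟩
  set M : Matrix (Fin n ⊕ Fin m) (Fin n ⊕ Fin m) ℝ := Matrix.fromBlocks
      (Aᵀ * P * A - P + Cᵀ * C) (Aᵀ * P * B + Cᵀ * D)
      (Bᵀ * P * A + Dᵀ * C) (Bᵀ * P * B + Dᵀ * D - γ ^ 2 • 1) with hM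
  obtain ⟨ε, hε, hq⟩ := posdef_quad_lb hLMI
  -- quadratic form identity
  have hid : ∀ (h : Fin n → ℝ) (v : Fin m → ℝ),
      (Sum.elim h v) ⬝ᵥ M *ᵥ (Sum.elim h v)
      = (A *ᵥ h + B *ᵥ v) ⬝ᵥ P *ᵥ (A *ᵥ h + B *ᵥ v) - h ⬝ᵥ P *ᵥ h
        + (C *ᵥ h + D *ᵥ v) ⬝ᵥ (C *ᵥ h + D *ᵥ v) - γ ^ 2 * (v ⬝ᵥ v) := by
    intro h v
    have hdot : ∀ {a b : ℕ} (M : Matrix (Fin a) (Fin b) ℝ) (x : Fin b → ℝ) (z : Fin a → ℝ),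
        x ⬝ᵥ Mᵀ *ᵥ z = (M *ᵥ x) ⬝ᵥ z := by
      intros a b M x z; rw [dotProduct_mulVec, vecMul_transpose]
    rw [hM]
    simp only [fromBlocks_mulVec, sumElim_dotProduct_sumElim, Matrix.add_mulVec,
      Matrix.sub_mulVec, Matrix.smul_mulVec, Matrix.one_mulVec,
      ← Matrix.mulVec_mulVec, hdot, dotProduct_add, add_dotProduct, dotProduct_sub,
      sub_dotProduct, dotProduct_smul, smul_eq_mul, Sum.elim_comp_inl, Sum.elim_comp_inr,
      Matrix.mulVec_add]
    ring
  refine ⟨ε, hε, fun u T => ?_⟩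
  set h : ℕ → Fin n → ℝ := ltiState A B u with hh
  set V : ℕ → ℝ := fun k => h k ⬝ᵥ P *ᵥ h k with hV
  -- per-step dissipation inequality
  have hstep : ∀ k, sqNorm (ltiOutput A B C D u k) + (V (k + 1) - V k)
      ≤ (γ ^ 2 - ε) * sqNorm (u k) := by
    intro k
    have hw := hq (Sum.elim (h k) (u k))
    rw [Matrix.neg_mulVec, dotProduct_neg, le_neg] at hw
    rw [hid (h k) (u k)] at hw
    have hsplit : (Sum.elim (h k) (u k)) ⬝ᵥ (Sum.elim (h k) (u k))
        = h k ⬝ᵥ h k + u k ⬝ᵥ u k := sumElim_dotProduct_sumElim _ _ _ _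
    have hhn : 0 ≤ h k ⬝ᵥ h k := Finset.sum_nonneg fun i _ => mul_self_nonneg _
    have hVk1 : V (k + 1) = (A *ᵥ h k + B *ᵥ u k) ⬝ᵥ P *ᵥ (A *ᵥ h k + B *ᵥ u k) := by
      rw [hV]; rfl
    have hz : sqNorm (ltiOutput A B C D u k)
        = (C *ᵥ h k + D *ᵥ u k) ⬝ᵥ (C *ᵥ h k + D *ᵥ u k) := by
      rw [sqNorm_eq_dot]; rfl
    rw [hz, hVk1, sqNorm_eq_dot]
    rw [hsplit] at hw
    nlinarith [hw, hhn, hε]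
  have hsum := Finset.sum_le_sum (fun k (_ : k ∈ Finset.range T) => hstep k)
  rw [Finset.sum_add_distrib, Finset.sum_range_sub (fun k => V k)] at hsum
  have hV0 : V 0 = 0 := by simp [hV, hh, ltiState]
  have hVT : 0 ≤ V T := by
    have := hP.posSemidef.re_dotProduct_nonneg (h T)
    simpa [hV] using this
  rw [hV0, sub_zero] at hsum
  calc ∑ k ∈ Finset.range T, sqNorm (ltiOutput A B C D u k)
      ≤ ∑ k ∈ Finset.range T, sqNorm (ltiOutput A B C D u k) + V T := le_add_of_nonneg_right hVT
    _ ≤ ∑ k ∈ Finset.range T, (γ ^ 2 - ε) * sqNorm (u k) := hsum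
    _ = (γ ^ 2 - ε) * ∑ k ∈ Finset.range T, sqNorm (u k) := by rw [Finset.mul_sum]
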